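/- arXiv:1709.05886 — 4 statements merged into one kernel-verified Lean document; each statement's English description precedes it below -/
import Mathlib

section
/- For all integers n ≥ 0 and 0 ≤ k ≤ ⌊n/2⌋, the identity ∑_{i=k}^{⌊n/2⌋} C(n+1, 2i+1) · C(i, k) = 2^{n-2k} · C(n-k, k) holds, where C(a,b) denotes the binomial coefficient. -/
open Finset

private def sAux (n k : ℕ) : ℕ := ∑ i ∈ Finset.range (n + 2), (n + 1).choose (2 * i + 1) * i.choose k
private def eAux (n k : ℕ) : ℕ := ∑ i ∈ Finset.range (n + 2), (n + 1).choose (2 * i) * i.choose k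

private lemma csym (a b : ℕ) : (a + b).choose a = (a + b).choose b := by
  rw [← Nat.choose_symm (Nat.le_add_right a b), Nat.add_sub_cancel_left]

private lemma sAux_rec (n k : ℕ) : sAux (n + 1) k = sAux n k + eAux n k := by
  unfold sAux eAux
  have h : ∀ i, (n + 1 + 1).choose (2 * i + 1) * i.choose k =
      (n + 1).choose (2 * i + 1) * i.choose k + (n + 1).choose (2 * i) * i.choose k := by
    intro i
    rw [Nat.choose_succ_succ (n + 1) (2 * i), add_mul]
    ring
  calc ∑ i ∈ Finset.range (n + 1 + 2), (n + 1 + 1).choose (2 * i + 1) * i.choose k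
      = ∑ i ∈ Finset.range (n + 3), ((n + 1).choose (2 * i + 1) * i.choose k
          + (n + 1).choose (2 * i) * i.choose k) := Finset.sum_congr rfl fun i _ => h i
    _ = (∑ i ∈ Finset.range (n + 3), (n + 1).choose (2 * i + 1) * i.choose k)
          + ∑ i ∈ Finset.range (n + 3), (n + 1).choose (2 * i) * i.choose k :=
        Finset.sum_add_distrib
    _ = _ := by
        rw [Finset.sum_range_succ (fun i => (n + 1).choose (2 * i + 1) * i.choose k) (n + 2),
          Finset.sum_range_succ (fun i => (n + 1).choose (2 * i) * i.choose k) (n + 2)]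
        have z1 : (n + 1).choose (2 * (n + 2) + 1) = 0 := Nat.choose_eq_zero_of_lt (by omega)
        have z2 : (n + 1).choose (2 * (n + 2)) = 0 := Nat.choose_eq_zero_of_lt (by omega)
        rw [z1, z2]
        simp

private lemma eAux_rec (n k : ℕ) :
    eAux (n + 1) k = eAux n k + ∑ j ∈ Finset.range (n + 2), (n + 1).choose (2 * j + 1) * (j + 1).choose k := by
  have hL : eAux (n + 1) k = (∑ j ∈ Finset.range (n + 2), (n + 1 + 1).choose (2 * (j + 1)) * (j + 1).choose k)
      + (n + 1 + 1).choose (2 * 0) * Nat.choose 0 k := by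
    unfold eAux
    exact Finset.sum_range_succ' (fun i => (n + 1 + 1).choose (2 * i) * i.choose k) (n + 2)
  have hR : eAux n k = (∑ j ∈ Finset.range (n + 1), (n + 1).choose (2 * (j + 1)) * (j + 1).choose k)
      + (n + 1).choose (2 * 0) * Nat.choose 0 k := by
    unfold eAux
    exact Finset.sum_range_succ' (fun i => (n + 1).choose (2 * i) * i.choose k) (n + 1)
  have hext : ∑ j ∈ Finset.range (n + 2), (n + 1).choose (2 * (j + 1)) * (j + 1).choose k
      = ∑ j ∈ Finset.range (n + 1), (n + 1).choose (2 * (j + 1)) * (j + 1).choose k := by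
    rw [Finset.sum_range_succ (fun j => (n + 1).choose (2 * (j + 1)) * (j + 1).choose k) (n + 1)]
    have z : (n + 1).choose (2 * (n + 1 + 1)) = 0 := Nat.choose_eq_zero_of_lt (by omega)
    rw [z]
    simp
  have hp : ∀ j, (n + 1 + 1).choose (2 * (j + 1)) * (j + 1).choose k =
      (n + 1).choose (2 * j + 1) * (j + 1).choose k + (n + 1).choose (2 * (j + 1)) * (j + 1).choose k := by
    intro j
    have : (n + 1 + 1).choose (2 * j + 1 + 1) = (n + 1).choose (2 * j + 1) + (n + 1).choose (2 * j + 1 + 1) :=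
      Nat.choose_succ_succ (n + 1) (2 * j + 1)
    rw [show 2 * (j + 1) = 2 * j + 1 + 1 from by ring, this, add_mul]
  rw [hL, Finset.sum_congr rfl fun j _ => hp j, Finset.sum_add_distrib, hR, hext]
  have : (n + 1 + 1).choose (2 * 0) = (n + 1).choose (2 * 0) := by norm_num
  rw [this]
  ring

private lemma shift_zero (n : ℕ) :
    ∑ j ∈ Finset.range (n + 2), (n + 1).choose (2 * j + 1) * (j + 1).choose 0 = sAux n 0 := by
  unfold sAux
  simp

private lemma shift_succ (n k : ℕ) :
    ∑ j ∈ Finset.range (n + 2), (n + 1).choose (2 * j + 1) * (j + 1).choose (k + 1)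
      = sAux n (k + 1) + sAux n k := by
  unfold sAux
  rw [← Finset.sum_add_distrib]
  refine Finset.sum_congr rfl fun j _ => ?_
  rw [Nat.choose_succ_succ j k]
  ring

private lemma sAux_boundary (k : ℕ) : sAux (2 * k + 1) (k + 1) = 0 := by
  unfold sAux
  refine Finset.sum_eq_zero fun i _ => ?_
  rcases le_or_gt i k with h | h
  · rw [Nat.choose_eq_zero_of_lt (show i < k + 1 by omega), mul_zero]
  · rw [Nat.choose_eq_zero_of_lt (show 2 * k + 1 + 1 < 2 * i + 1 by omega), zero_mul]

private lemma eAux_boundary (k : ℕ) : eAux (2 * k + 1) (k + 1) = 1 := by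
  unfold eAux
  rw [Finset.sum_eq_single (k + 1)]
  · rw [show 2 * (k + 1) = 2 * k + 1 + 1 from by ring, Nat.choose_self, Nat.choose_self]
  · intro i _ hi
    rcases lt_or_gt_of_ne hi with h | h
    · rw [Nat.choose_eq_zero_of_lt (show i < k + 1 from h), mul_zero]
    · rw [Nat.choose_eq_zero_of_lt (show 2 * k + 1 + 1 < 2 * i by omega), zero_mul]
  · intro h
    exact absurd (Finset.mem_range.mpr (by omega)) h

private lemma key : ∀ n : ℕ, ∀ k m : ℕ, n = 2 * k + m →
    sAux n k = 2 ^ m * (k + m).choose k ∧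
    eAux n k = 2 ^ m * ((k + m).choose k + 2 * (k + m).choose (m + 1)) := by
  intro n
  induction n with
  | zero =>
    intro k m hn
    obtain ⟨rfl, rfl⟩ : k = 0 ∧ m = 0 := by omega
    constructor
    · unfold sAux; decide
    · unfold eAux; decide
  | succ n ih =>
    intro k m hn
    rcases Nat.eq_zero_or_pos m with rfl | hm
    · -- boundary case: n + 1 = 2 * k, k ≥ 1
      obtain ⟨k', rfl⟩ : ∃ k', k = k' + 1 := ⟨k - 1, by omega⟩
      have hn' : n = 2 * k' + 1 := by omega
      subst hn'
      have h1 : (k' + 1).choose k' = k' + 1 := by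
        rw [show k' + 1 = k' + 1 from rfl, csym k' 1, Nat.choose_one_right]
      constructor
      · rw [sAux_rec, sAux_boundary, eAux_boundary]
        simp
      · rw [eAux_rec, shift_succ, eAux_boundary, sAux_boundary]
        have hs : sAux (2 * k' + 1) k' = 2 ^ 1 * (k' + 1).choose k' := (ih k' 1 (by omega)).1
        rw [hs, h1]
        simp [Nat.choose_one_right, Nat.choose_self]
    · -- main case: m = m' + 1, 2k ≤ n
      obtain ⟨m', rfl⟩ : ∃ m', m = m' + 1 := ⟨m - 1, by omega⟩
      have hn' : n = 2 * k + m' := by omega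
      obtain ⟨hs, he⟩ := ih k m' hn'
      have hstep : sAux (n + 1) k = 2 ^ (m' + 1) * (k + (m' + 1)).choose k := by
        rw [sAux_rec, hs, he]
        have hsym : (k + m').choose k = (k + m').choose m' := csym k m'
        have hp : (k + (m' + 1)).choose (m' + 1) = (k + m').choose m' + (k + m').choose (m' + 1) := by
          rw [show k + (m' + 1) = (k + m') + 1 from by ring]
          exact Nat.choose_succ_succ (k + m') m'
        have hsym2 : (k + (m' + 1)).choose k = (k + (m' + 1)).choose (m' + 1) := csym k (m' + 1)
        rw [hsym2, hp, hsym]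
        ring
      refine ⟨hstep, ?_⟩
      rcases Nat.eq_zero_or_pos k with rfl | hk
      · rw [eAux_rec, shift_zero, hs, he]
        simp only [zero_add]
        have z1 : m'.choose (m' + 1) = 0 := Nat.choose_eq_zero_of_lt (by omega)
        have z2 : (m' + 1).choose (m' + 1 + 1) = 0 := Nat.choose_eq_zero_of_lt (by omega)
        rw [z1, z2, Nat.choose_zero_right, Nat.choose_zero_right]
        ring
      · obtain ⟨k', rfl⟩ : ∃ k', k = k' + 1 := ⟨k - 1, by omega⟩
        rw [eAux_rec, shift_succ, hs, he]
        have hs' : sAux n k' = 2 ^ (m' + 2) * (k' + (m' + 2)).choose k' :=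
          (ih k' (m' + 2) (by omega)).1
        rw [hs']
        have e1 : (k' + 1 + m').choose (k' + 1) = (k' + 1 + m').choose m' := csym (k' + 1) m'
        have e2 : (k' + (m' + 2)).choose k' = (k' + (m' + 2)).choose (m' + 2) := csym k' (m' + 2)
        have e3 : (k' + 1 + (m' + 1)).choose (k' + 1) = (k' + 1 + (m' + 1)).choose (m' + 1) :=
          csym (k' + 1) (m' + 1)
        have p1 : (k' + 1 + (m' + 1)).choose (m' + 1)
            = (k' + 1 + m').choose m' + (k' + 1 + m').choose (m' + 1) := by
          rw [show k' + 1 + (m' + 1) = (k' + 1 + m') + 1 from by ring]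
          exact Nat.choose_succ_succ (k' + 1 + m') m'
        have e4 : (k' + (m' + 2)).choose (m' + 2) = (k' + 1 + (m' + 1)).choose (m' + 1 + 1) := by
          rw [show k' + (m' + 2) = k' + 1 + (m' + 1) from by ring]
        rw [e1, e2, e3, p1, e4]
        ring

/-- For all integers `n ≥ 0` and `0 ≤ k ≤ ⌊n/2⌋`,
`∑_{i=k}^{⌊n/2⌋} C(n+1, 2i+1) · C(i, k) = 2^{n-2k} · C(n-k, k)`. -/
theorem stmt1 (n k : ℕ) (hk : k ≤ n / 2) :
    ∑ i ∈ Finset.Icc k (n / 2), (n + 1).choose (2 * i + 1) * i.choose k =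
      2 ^ (n - 2 * k) * (n - k).choose k := by
  have h2k : 2 * k ≤ n := by omega
  have hmain := (key n k (n - 2 * k) (by omega)).1
  have hsum : sAux n k = ∑ i ∈ Finset.Icc k (n / 2), (n + 1).choose (2 * i + 1) * i.choose k := by
    unfold sAux
    symm
    refine Finset.sum_subset ?_ ?_
    · intro i hi
      rw [Finset.mem_Icc] at hi
      rw [Finset.mem_range]
      omega
    · intro i hi hni
      rw [Finset.mem_range] at hi
      rw [Finset.mem_Icc] at hni
      push_neg at hni
      rcases lt_or_ge i k with h | h
      · rw [Nat.choose_eq_zero_of_lt h, mul_zero]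
      · have h2 : n / 2 < i := hni h
        rw [Nat.choose_eq_zero_of_lt (show n + 1 < 2 * i + 1 by omega), zero_mul]
  rw [← hsum, hmain]
  congr 2
  omega
end

section
/- Let G = C_{n+1} ≀ S₂ act on ℂ[a₁,a₂,b₁,b₂], where each copy of C_{n+1} acts as diag(ζ,ζ^{-1}) on (a₁,a₂) and on (b₁,b₂) respectively, and S₂ swaps aᵢ with bᵢ. Then the invariant ring ℂ[a₁,a₂,b₁,b₂]^G is generated as a ℂ-algebra by the nine elements x₁ = u₁+u₂, x₂ = v₁+v₂, x₃ = w₁+w₂, x₄ = (u₁−u₂)², x₅ = (v₁−v₂)², x₆ = (w₁−w₂)², x₇ = (u₁−u₂)(v₁−v₂), x₈ = (u₁−u₂)(w₁−w₂), x₉ = (v₁−v₂)(w₁−w₂), where u₁ = a₁^{n+1}, v₁ = a₁a₂, w₁ = a₂^{n+1}, u₂ = b₁^{n+1}, v₂ = b₁b₂, w₂ = b₂^{n+1}. -/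
open MvPolynomial

lemma swap_key {R : Type*} [CommRing R] [Algebra ℂ R] (A : Subalgebra ℂ R)
    {ι : Type*} (p q : ι → R)
    (hs : ∀ i, p i + q i ∈ A) (hd : ∀ i j, (p i - q i) * (p j - q j) ∈ A) :
    ∀ k (M N : Multiset ι), Multiset.card M + Multiset.card N ≤ k →
      ((M.map p).prod * (N.map q).prod + (N.map p).prod * (M.map q).prod ∈ A) ∧
      ∀ i, (p i - q i) * ((M.map p).prod * (N.map q).prod - (N.map p).prod * (M.map q).prod) ∈ A := by
  have half : ∀ x y : R, (2:ℂ) • x = y → y ∈ A → x ∈ A := by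
    intro x y hxy hy
    have : x = (2⁻¹:ℂ) • y := by rw [← hxy, smul_smul]; norm_num
    rw [this]; exact A.smul_mem hy _
  intro k
  induction k with
  | zero =>
    intro M N h
    rw [Nat.le_zero, Nat.add_eq_zero] at h
    rw [Multiset.card_eq_zero.mp h.1, Multiset.card_eq_zero.mp h.2]
    simp only [Multiset.map_zero, Multiset.prod_zero, one_mul, sub_self, mul_zero]
    exact ⟨A.add_mem A.one_mem A.one_mem, fun i => A.zero_mem⟩
  | succ k ih =>
    intro M N h
    rcases Multiset.empty_or_exists_mem M with hM | ⟨j, hj⟩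
    · rcases Multiset.empty_or_exists_mem N with hN | ⟨j, hj⟩
      · subst hM; subst hN
        simp only [Multiset.map_zero, Multiset.prod_zero, one_mul, sub_self, mul_zero]
        exact ⟨A.add_mem A.one_mem A.one_mem, fun i => A.zero_mem⟩
      · subst hM
        obtain ⟨N', rfl⟩ := Multiset.exists_cons_of_mem hj
        have hc : Multiset.card (0 : Multiset ι) + Multiset.card N' ≤ k := by
          simp only [Multiset.card_zero, Multiset.card_cons, zero_add] at h ⊢
          omega
        obtain ⟨hT', hD'⟩ := ih 0 N' hc
        set PM := ((0 : Multiset ι).map p).prod with hPM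
        set QM := ((0 : Multiset ι).map q).prod with hQM
        set PN := (N'.map p).prod with hPN
        set QN := (N'.map q).prod with hQN
        constructor
        · refine half _ ((p j + q j) * (PM * QN + PN * QM)
              - (p j - q j) * (PM * QN - PN * QM)) ?_ ?_
          · rw [two_smul, Multiset.map_cons, Multiset.map_cons, Multiset.prod_cons,
              Multiset.prod_cons, ← hPN, ← hQN]
            ring
          · exact A.sub_mem (A.mul_mem (hs j) hT') (hD' j)
        · intro i
          refine half _ ((p j + q j) * ((p i - q i) * (PM * QN - PN * QM))
              - ((p i - q i) * (p j - q j)) * (PM * QN + PN * QM)) ?_ ?_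
          · rw [two_smul, Multiset.map_cons, Multiset.map_cons, Multiset.prod_cons,
              Multiset.prod_cons, ← hPN, ← hQN]
            ring
          · exact A.sub_mem (A.mul_mem (hs j) (hD' i)) (A.mul_mem (hd i j) hT')
    · obtain ⟨M', rfl⟩ := Multiset.exists_cons_of_mem hj
      have hc : Multiset.card M' + Multiset.card N ≤ k := by
        simp only [Multiset.card_cons] at h; omega
      obtain ⟨hT', hD'⟩ := ih M' N hc
      set PM := (M'.map p).prod with hPM
      set QM := (M'.map q).prod with hQM
      set PN := (N.map p).prod with hPN
      set QN := (N.map q).prod with hQN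
      constructor
      · refine half _ ((p j + q j) * (PM * QN + PN * QM)
            + (p j - q j) * (PM * QN - PN * QM)) ?_ ?_
        · rw [two_smul, Multiset.map_cons, Multiset.map_cons, Multiset.prod_cons,
            Multiset.prod_cons, ← hPM, ← hQM]
          ring
        · exact A.add_mem (A.mul_mem (hs j) hT') (hD' j)
      · intro i
        refine half _ ((p j + q j) * ((p i - q i) * (PM * QN - PN * QM))
            + ((p i - q i) * (p j - q j)) * (PM * QN + PN * QM)) ?_ ?_
        · rw [two_smul, Multiset.map_cons, Multiset.map_cons, Multiset.prod_cons,
            Multiset.prod_cons, ← hPM, ← hQM]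
          ring
        · exact A.add_mem (A.mul_mem (hs j) (hD' i)) (A.mul_mem (hd i j) hT')

lemma monomial_eq_prod' (d : Fin 4 →₀ ℕ) (c : ℂ) :
    (monomial d c : MvPolynomial (Fin 4) ℂ) = C c * ∏ i, X i ^ d i := by
  rw [monomial_eq, Finsupp.prod_pow]

lemma diag_monomial (g : Fin 4 → ℂ) (d : Fin 4 →₀ ℕ) (c : ℂ) :
    aeval (fun i => C (g i) * X i : Fin 4 → MvPolynomial (Fin 4) ℂ) (monomial d c)
      = monomial d (c * ∏ i, g i ^ d i) := by
  rw [monomial_eq_prod', monomial_eq_prod', map_mul, aeval_C]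
  simp only [map_prod, map_pow, aeval_X, mul_pow]
  rw [Finset.prod_mul_distrib,
    Finset.prod_congr rfl (fun i (_ : i ∈ Finset.univ) => (C_pow (g i) (d i)).symm),
    ← map_prod, algebraMap_eq, ← mul_assoc, ← C_mul]

lemma diag_coeff (g : Fin 4 → ℂ) (p : MvPolynomial (Fin 4) ℂ) (d : Fin 4 →₀ ℕ) :
    coeff d (aeval (fun i => C (g i) * X i : Fin 4 → MvPolynomial (Fin 4) ℂ) p)
      = coeff d p * ∏ i, g i ^ d i := by
  conv_lhs => rw [p.as_sum, map_sum]
  rw [Finset.sum_congr rfl (fun e _ => diag_monomial g e (coeff e p))]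
  rw [coeff_sum]
  simp only [coeff_monomial]
  rw [Finset.sum_ite_eq' p.support d (fun e => coeff e p * ∏ i, g i ^ e i)]
  by_cases hd : d ∈ p.support
  · simp [hd]
  · simp [hd, notMem_support_iff.mp hd]

lemma pair_multiset {R : Type*} [CommSemiring R] (m a b k : ℕ)
    (h : a = b + m * k ∨ b = a + m * k) :
    ∃ M : Multiset (Fin 3), ∀ x y : R, (M.map ![x^m, x*y, y^m]).prod = x^a * y^b := by
  rcases h with h | h
  · refine ⟨Multiset.replicate k 0 + Multiset.replicate b 1, fun x y => ?_⟩
    subst h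
    rw [Multiset.map_add, Multiset.prod_add, Multiset.map_replicate, Multiset.prod_replicate,
      Multiset.map_replicate, Multiset.prod_replicate]
    simp only [Matrix.cons_val_zero, Matrix.cons_val_one, Matrix.head_cons]
    rw [← pow_mul, mul_pow, pow_add]
    ring
  · refine ⟨Multiset.replicate a 1 + Multiset.replicate k 2, fun x y => ?_⟩
    subst h
    rw [Multiset.map_add, Multiset.prod_add, Multiset.map_replicate, Multiset.prod_replicate,
      Multiset.map_replicate, Multiset.prod_replicate]
    simp only [Matrix.cons_val_one, Matrix.head_cons, Matrix.cons_val_two, Matrix.tail_cons,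
      Matrix.cons_val_zero]
    rw [← pow_mul, mul_pow, pow_add]
    ring

/-- The wreath product `G = C_{n+1} ≀ S₂` acts on `ℂ[a₁,a₂,b₁,b₂]`
(variables `X 0, X 1, X 2, X 3`): the two copies of `C_{n+1}` act by
`σ₁ : a₁ ↦ ζa₁, a₂ ↦ ζ⁻¹a₂` and `σ₂ : b₁ ↦ ζb₁, b₂ ↦ ζ⁻¹b₂`, and `S₂` acts by
`τ` swapping `aᵢ` with `bᵢ`.  A polynomial is `G`-invariant iff it is fixed by
these three generators.  The claim: the invariant ring is generated as a
ℂ-algebra by the nine elements `x₁,…,x₉` built from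
`u₁ = a₁^{n+1}, v₁ = a₁a₂, w₁ = a₂^{n+1}, u₂ = b₁^{n+1}, v₂ = b₁b₂, w₂ = b₂^{n+1}`. -/
theorem stmt6 (n : ℕ) (hn : 1 ≤ n) (ζ : ℂ) (hζ : IsPrimitiveRoot ζ (n + 1))
    (σ₁ σ₂ τ : MvPolynomial (Fin 4) ℂ →ₐ[ℂ] MvPolynomial (Fin 4) ℂ)
    (hσ₁ : σ₁ = MvPolynomial.aeval ![C ζ * X 0, C ζ⁻¹ * X 1, X 2, X 3])
    (hσ₂ : σ₂ = MvPolynomial.aeval ![X 0, X 1, C ζ * X 2, C ζ⁻¹ * X 3])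
    (hτ : τ = MvPolynomial.aeval ![X 2, X 3, X 0, X 1])
    (u₁ v₁ w₁ u₂ v₂ w₂ : MvPolynomial (Fin 4) ℂ)
    (hu₁ : u₁ = X 0 ^ (n + 1)) (hv₁ : v₁ = X 0 * X 1) (hw₁ : w₁ = X 1 ^ (n + 1))
    (hu₂ : u₂ = X 2 ^ (n + 1)) (hv₂ : v₂ = X 2 * X 3) (hw₂ : w₂ = X 3 ^ (n + 1)) :
    ∀ p : MvPolynomial (Fin 4) ℂ,
      (σ₁ p = p ∧ σ₂ p = p ∧ τ p = p) ↔
        p ∈ Algebra.adjoin ℂ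
          ({u₁ + u₂, v₁ + v₂, w₁ + w₂,
            (u₁ - u₂) ^ 2, (v₁ - v₂) ^ 2, (w₁ - w₂) ^ 2,
            (u₁ - u₂) * (v₁ - v₂), (u₁ - u₂) * (w₁ - w₂),
            (v₁ - v₂) * (w₁ - w₂)} : Set (MvPolynomial (Fin 4) ℂ)) := by
  have h0 : ζ ≠ 0 := hζ.ne_zero (Nat.succ_ne_zero n)
  set S : Set (MvPolynomial (Fin 4) ℂ) :=
    {u₁ + u₂, v₁ + v₂, w₁ + w₂,
     (u₁ - u₂) ^ 2, (v₁ - v₂) ^ 2, (w₁ - w₂) ^ 2,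
     (u₁ - u₂) * (v₁ - v₂), (u₁ - u₂) * (w₁ - w₂),
     (v₁ - v₂) * (w₁ - w₂)} with hS
  set A : Subalgebra ℂ (MvPolynomial (Fin 4) ℂ) := Algebra.adjoin ℂ S with hA
  -- fixed point computations
  have hσ₁u₁ : σ₁ u₁ = u₁ := by
    rw [hσ₁, hu₁]; simp [map_pow, mul_pow, ← C_pow, hζ.pow_eq_one]
  have hσ₁v₁ : σ₁ v₁ = v₁ := by
    rw [hσ₁, hv₁, map_mul, aeval_X, aeval_X]
    show C ζ * X 0 * (C ζ⁻¹ * X 1) = _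
    rw [mul_mul_mul_comm, ← C_mul, mul_inv_cancel₀ h0, C_1, one_mul]
  have hσ₁w₁ : σ₁ w₁ = w₁ := by
    rw [hσ₁, hw₁]; simp [map_pow, mul_pow, ← C_pow, inv_pow, hζ.pow_eq_one]
  have hσ₁u₂ : σ₁ u₂ = u₂ := by rw [hσ₁, hu₂]; simp
  have hσ₁v₂ : σ₁ v₂ = v₂ := by rw [hσ₁, hv₂]; simp
  have hσ₁w₂ : σ₁ w₂ = w₂ := by rw [hσ₁, hw₂]; simp
  have hσ₂u₁ : σ₂ u₁ = u₁ := by rw [hσ₂, hu₁]; simp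
  have hσ₂v₁ : σ₂ v₁ = v₁ := by rw [hσ₂, hv₁]; simp
  have hσ₂w₁ : σ₂ w₁ = w₁ := by rw [hσ₂, hw₁]; simp
  have hσ₂u₂ : σ₂ u₂ = u₂ := by
    rw [hσ₂, hu₂]; simp [map_pow, mul_pow, ← C_pow, hζ.pow_eq_one]
  have hσ₂v₂ : σ₂ v₂ = v₂ := by
    rw [hσ₂, hv₂, map_mul, aeval_X, aeval_X]
    show C ζ * X 2 * (C ζ⁻¹ * X 3) = _
    rw [mul_mul_mul_comm, ← C_mul, mul_inv_cancel₀ h0, C_1, one_mul]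
  have hσ₂w₂ : σ₂ w₂ = w₂ := by
    rw [hσ₂, hw₂]; simp [map_pow, mul_pow, ← C_pow, inv_pow, hζ.pow_eq_one]
  have hτu₁ : τ u₁ = u₂ := by rw [hτ, hu₁, hu₂]; simp
  have hτv₁ : τ v₁ = v₂ := by rw [hτ, hv₁, hv₂]; simp
  have hτw₁ : τ w₁ = w₂ := by rw [hτ, hw₁, hw₂]; simp
  have hτu₂ : τ u₂ = u₁ := by rw [hτ, hu₁, hu₂]; simp
  have hτv₂ : τ v₂ = v₁ := by rw [hτ, hv₁, hv₂]; simp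
  have hτw₂ : τ w₂ = w₁ := by rw [hτ, hw₁, hw₂]; simp
  -- generators of the adjoin
  have hgen : ∀ x ∈ S, x ∈ A := fun x hx => Algebra.subset_adjoin hx
  have m1 : u₁ + u₂ ∈ A := hgen _ (Set.mem_insert _ _)
  have m2 : v₁ + v₂ ∈ A := hgen _ (Set.mem_insert_of_mem _ (Set.mem_insert _ _))
  have m3 : w₁ + w₂ ∈ A := hgen _ (Set.mem_insert_of_mem _ (Set.mem_insert_of_mem _ (Set.mem_insert _ _)))
  have m4 : (u₁ - u₂) ^ 2 ∈ A := hgen _ (Set.mem_insert_of_mem _ (Set.mem_insert_of_mem _ (Set.mem_insert_of_mem _ (Set.mem_insert _ _))))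
  have m5 : (v₁ - v₂) ^ 2 ∈ A := hgen _ (Set.mem_insert_of_mem _ (Set.mem_insert_of_mem _ (Set.mem_insert_of_mem _ (Set.mem_insert_of_mem _ (Set.mem_insert _ _)))))
  have m6 : (w₁ - w₂) ^ 2 ∈ A := hgen _ (Set.mem_insert_of_mem _ (Set.mem_insert_of_mem _ (Set.mem_insert_of_mem _ (Set.mem_insert_of_mem _ (Set.mem_insert_of_mem _ (Set.mem_insert _ _))))))
  have m7 : (u₁ - u₂) * (v₁ - v₂) ∈ A := hgen _ (Set.mem_insert_of_mem _ (Set.mem_insert_of_mem _ (Set.mem_insert_of_mem _ (Set.mem_insert_of_mem _ (Set.mem_insert_of_mem _ (Set.mem_insert_of_mem _ (Set.mem_insert _ _)))))))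
  have m8 : (u₁ - u₂) * (w₁ - w₂) ∈ A := hgen _ (Set.mem_insert_of_mem _ (Set.mem_insert_of_mem _ (Set.mem_insert_of_mem _ (Set.mem_insert_of_mem _ (Set.mem_insert_of_mem _ (Set.mem_insert_of_mem _ (Set.mem_insert_of_mem _ (Set.mem_insert _ _))))))))
  have m9 : (v₁ - v₂) * (w₁ - w₂) ∈ A := hgen _ (Set.mem_insert_of_mem _ (Set.mem_insert_of_mem _ (Set.mem_insert_of_mem _ (Set.mem_insert_of_mem _ (Set.mem_insert_of_mem _ (Set.mem_insert_of_mem _ (Set.mem_insert_of_mem _ (Set.mem_insert_of_mem _ (Set.mem_singleton_iff.mpr rfl)))))))))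
  set pf : Fin 3 → MvPolynomial (Fin 4) ℂ := ![u₁, v₁, w₁] with hpf
  set qf : Fin 3 → MvPolynomial (Fin 4) ℂ := ![u₂, v₂, w₂] with hqf
  have hsmem : ∀ i, pf i + qf i ∈ A := by
    intro i
    fin_cases i <;>
      simp only [hpf, hqf, Matrix.cons_val_zero, Matrix.cons_val_one, Matrix.head_cons,
        Matrix.cons_val_two, Matrix.tail_cons]
    · exact m1
    · exact m2
    · exact m3
  have hdmem : ∀ i j, (pf i - qf i) * (pf j - qf j) ∈ A := by
    intro i j
    fin_cases i <;> fin_cases j <;>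
      simp only [hpf, hqf, Matrix.cons_val_zero, Matrix.cons_val_one, Matrix.head_cons,
        Matrix.cons_val_two, Matrix.tail_cons]
    · rw [← sq]; exact m4
    · exact m7
    · exact m8
    · rw [mul_comm]; exact m7
    · rw [← sq]; exact m5
    · exact m9
    · rw [mul_comm]; exact m8
    · rw [mul_comm]; exact m9
    · rw [← sq]; exact m6
  intro p
  constructor
  · rintro ⟨h1, h2, h3⟩
    -- congruence conditions on exponents
    have hcong : ∀ d : Fin 4 →₀ ℕ, d ∈ p.support →
        ζ ^ (d 0) = ζ ^ (d 1) ∧ ζ ^ (d 2) = ζ ^ (d 3) := by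
      intro d hd
      have hne : coeff d p ≠ 0 := mem_support_iff.mp hd
      constructor
      · have heq1 : σ₁ = aeval (fun i => C ((![ζ, ζ⁻¹, 1, 1] : Fin 4 → ℂ) i) * X i) := by
          rw [hσ₁]; congr 1; funext i; fin_cases i <;> simp
        have hc := diag_coeff ![ζ, ζ⁻¹, 1, 1] p d
        rw [← heq1, h1] at hc
        have hprod : (∏ i, (![ζ, ζ⁻¹, 1, 1] : Fin 4 → ℂ) i ^ d i) = ζ ^ d 0 * ζ⁻¹ ^ d 1 := by
          rw [Fin.prod_univ_four]; simp
        rw [hprod] at hc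
        have ht : (1 : ℂ) = ζ ^ d 0 * ζ⁻¹ ^ d 1 :=
          mul_left_cancel₀ hne (by rw [mul_one, ← hc])
        field_simp at ht
        rw [one_div, inv_pow] at ht; exact (mul_inv_eq_one₀ (pow_ne_zero _ h0)).mp ht.symm
      · have heq2 : σ₂ = aeval (fun i => C ((![1, 1, ζ, ζ⁻¹] : Fin 4 → ℂ) i) * X i) := by
          rw [hσ₂]; congr 1; funext i; fin_cases i <;> simp
        have hc := diag_coeff ![1, 1, ζ, ζ⁻¹] p d
        rw [← heq2, h2] at hc
        have hprod : (∏ i, (![1, 1, ζ, ζ⁻¹] : Fin 4 → ℂ) i ^ d i) = ζ ^ d 2 * ζ⁻¹ ^ d 3 := by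
          rw [Fin.prod_univ_four]; simp
        rw [hprod] at hc
        have ht : (1 : ℂ) = ζ ^ d 2 * ζ⁻¹ ^ d 3 :=
          mul_left_cancel₀ hne (by rw [mul_one, ← hc])
        field_simp at ht
        rw [one_div, inv_pow] at ht; exact (mul_inv_eq_one₀ (pow_ne_zero _ h0)).mp ht.symm
    -- turn congruences into multisets
    have hdvd : ∀ a b : ℕ, ζ ^ a = ζ ^ b → ∃ k, a = b + (n+1) * k ∨ b = a + (n+1) * k := by
      intro a b hab
      rcases le_total b a with h | h
      · have h1 : ζ ^ (a - b) * ζ ^ b = ζ ^ b := by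
          rw [← pow_add, Nat.sub_add_cancel h, hab]
        have h2 : ζ ^ (a - b) = 1 := by
          have := mul_right_cancel₀ (pow_ne_zero b h0) (by rw [h1, one_mul] : ζ ^ (a-b) * ζ ^ b = 1 * ζ ^ b)
          exact this
        obtain ⟨k, hk⟩ := (hζ.pow_eq_one_iff_dvd _).mp h2
        exact ⟨k, Or.inl (by omega)⟩
      · have h1 : ζ ^ (b - a) * ζ ^ a = ζ ^ a := by
          rw [← pow_add, Nat.sub_add_cancel h, ← hab]
        have h2 : ζ ^ (b - a) = 1 := by
          have := mul_right_cancel₀ (pow_ne_zero a h0) (by rw [h1, one_mul] : ζ ^ (b-a) * ζ ^ a = 1 * ζ ^ a)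
          exact this
        obtain ⟨k, hk⟩ := (hζ.pow_eq_one_iff_dvd _).mp h2
        exact ⟨k, Or.inr (by omega)⟩
    -- each symmetrized monomial is in A
    have hmono : ∀ d : Fin 4 →₀ ℕ, d ∈ p.support →
        (monomial d 1 : MvPolynomial (Fin 4) ℂ) + τ (monomial d 1) ∈ A := by
      intro d hd
      obtain ⟨h01, h23⟩ := hcong d hd
      obtain ⟨k₁, hk₁⟩ := hdvd _ _ h01
      obtain ⟨k₂, hk₂⟩ := hdvd _ _ h23
      obtain ⟨M, hM⟩ := pair_multiset (R := MvPolynomial (Fin 4) ℂ) (n+1) (d 0) (d 1) k₁ hk₁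
      obtain ⟨N, hN⟩ := pair_multiset (R := MvPolynomial (Fin 4) ℂ) (n+1) (d 2) (d 3) k₂ hk₂
      have hMp : (M.map pf).prod = X 0 ^ d 0 * X 1 ^ d 1 := by
        rw [hpf, hu₁, hv₁, hw₁]; exact hM (X 0) (X 1)
      have hMq : (M.map qf).prod = X 2 ^ d 0 * X 3 ^ d 1 := by
        rw [hqf, hu₂, hv₂, hw₂]; exact hM (X 2) (X 3)
      have hNp : (N.map pf).prod = X 0 ^ d 2 * X 1 ^ d 3 := by
        rw [hpf, hu₁, hv₁, hw₁]; exact hN (X 0) (X 1)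
      have hNq : (N.map qf).prod = X 2 ^ d 2 * X 3 ^ d 3 := by
        rw [hqf, hu₂, hv₂, hw₂]; exact hN (X 2) (X 3)
      have hm1 : (monomial d 1 : MvPolynomial (Fin 4) ℂ)
          = (M.map pf).prod * (N.map qf).prod := by
        rw [monomial_eq_prod', C_1, one_mul, Fin.prod_univ_four, hMp, hNq]; ring
      have hτpf : ∀ K : Multiset (Fin 3), τ ((K.map pf).prod) = (K.map qf).prod := by
        intro K
        rw [map_multiset_prod, Multiset.map_map]
        congr 1
        apply Multiset.map_congr rfl
        intro i _
        fin_cases i <;>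
          simp [hpf, hqf, hτu₁, hτv₁, hτw₁]
      have hτqf : ∀ K : Multiset (Fin 3), τ ((K.map qf).prod) = (K.map pf).prod := by
        intro K
        rw [map_multiset_prod, Multiset.map_map]
        congr 1
        apply Multiset.map_congr rfl
        intro i _
        fin_cases i <;>
          simp [hpf, hqf, hτu₂, hτv₂, hτw₂]
      have hm2 : τ (monomial d 1) = (N.map pf).prod * (M.map qf).prod := by
        rw [hm1, map_mul, hτpf, hτqf]
        ring
      rw [hm2, hm1]
      exact (swap_key A pf qf hsmem hdmem (Multiset.card M + Multiset.card N) M N le_rfl).1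
    -- conclude
    have hsum : p + τ p ∈ A := by
      have e : p + τ p = ∑ d ∈ p.support,
          (monomial d (coeff d p) + τ (monomial d (coeff d p))) := by
        conv_lhs => rw [p.as_sum]
        rw [map_sum, ← Finset.sum_add_distrib]
      rw [e]
      refine Subalgebra.sum_mem A fun d hd => ?_
      have hmon : (monomial d (coeff d p) : MvPolynomial (Fin 4) ℂ)
          = coeff d p • (monomial d 1 : MvPolynomial (Fin 4) ℂ) := by
        rw [smul_monomial, smul_eq_mul, mul_one]
      rw [hmon, map_smul, ← smul_add]
      exact A.smul_mem (hmono d hd) _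
    have : p = (2⁻¹ : ℂ) • (p + τ p) := by
      rw [h3, ← two_smul ℂ p, smul_smul]; norm_num
    rw [this]
    exact A.smul_mem hsum _
  · intro hp
    have hle : A ≤ AlgHom.equalizer σ₁ (AlgHom.id ℂ _) ⊓
        (AlgHom.equalizer σ₂ (AlgHom.id ℂ _) ⊓ AlgHom.equalizer τ (AlgHom.id ℂ _)) := by
      rw [hA]
      apply Algebra.adjoin_le
      intro x hx
      simp only [hS, Set.mem_insert_iff, Set.mem_singleton_iff] at hx
      have fix : ∀ y : MvPolynomial (Fin 4) ℂ, σ₁ y = y → σ₂ y = y → τ y = y →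
          y ∈ AlgHom.equalizer σ₁ (AlgHom.id ℂ _) ⊓
            (AlgHom.equalizer σ₂ (AlgHom.id ℂ _) ⊓ AlgHom.equalizer τ (AlgHom.id ℂ _)) := by
        intro y a b c
        exact ⟨a, b, c⟩
      rcases hx with rfl|rfl|rfl|rfl|rfl|rfl|rfl|rfl|rfl <;>
        refine fix _ ?_ ?_ ?_ <;>
        simp only [map_add, map_sub, map_mul, map_pow,
          hσ₁u₁, hσ₁v₁, hσ₁w₁, hσ₁u₂, hσ₁v₂, hσ₁w₂,
          hσ₂u₁, hσ₂v₁, hσ₂w₁, hσ₂u₂, hσ₂v₂, hσ₂w₂,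
          hτu₁, hτv₁, hτw₁, hτu₂, hτv₂, hτw₂] <;>
        ring
    have := hle hp
    rw [Algebra.mem_inf, Algebra.mem_inf] at this
    obtain ⟨a, b, c⟩ := this
    exact ⟨a, b, c⟩
end

section
/- In a Noetherian commutative ring, for ideals I and J and any m ∈ ℕ, there exists n ∈ ℕ such that Iⁿ ∩ Jⁿ ⊆ (I ∩ J)^m. -/
/-- In a Noetherian commutative ring, for ideals `I`, `J` and any `m`, there exists
`n` with `Iⁿ ⊓ Jⁿ ⊆ (I ⊓ J)^m`. -/
theorem stmt13 {A : Type*} [CommRing A] [IsNoetherianRing A] (I J : Ideal A) (m : ℕ) :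
    ∃ n : ℕ, I ^ n ⊓ J ^ n ≤ (I ⊓ J) ^ m := by
  obtain ⟨k, hk⟩ := Ideal.exists_pow_inf_eq_pow_smul I (J ^ m : Ideal A)
  refine ⟨k + m, ?_⟩
  have h1 : I ^ (k + m) ⊓ J ^ (k + m) ≤ I ^ (k + m) ⊓ J ^ m :=
    inf_le_inf le_rfl (Ideal.pow_le_pow_right (Nat.le_add_left m k))
  have h2 := hk (k + m) (Nat.le_add_right k m)
  simp only [Ideal.smul_eq_mul, Ideal.mul_top, Nat.add_sub_cancel_left] at h2
  calc I ^ (k + m) ⊓ J ^ (k + m) ≤ I ^ (k + m) ⊓ J ^ m := h1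
    _ = I ^ m * (I ^ k ⊓ J ^ m) := h2
    _ ≤ I ^ m * J ^ m := Ideal.mul_mono_right inf_le_right
    _ = (I * J) ^ m := (mul_pow I J m).symm
    _ ≤ (I ⊓ J) ^ m := Ideal.pow_right_mono Ideal.mul_le_inf m
end

section
/- Let V = ℙ¹ × ℙ¹ with affine coordinates x, y on ℂ × ℂ ⊂ V. The ℂ-algebra of global sections of the completion of the cotangent bundle T*_V along the zero section, viewed inside ℂ[x,y][[∂_x,∂_y]], is topologically generated by the six elements ∂_x, x∂_x, x²∂_x, ∂_y, y∂_y, y²∂_y. -/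
open MvPolynomial

noncomputable section

/-- The coefficient ring `ℂ[x,y]` (with `x = X 0`, `y = X 1`). -/
abbrev PolyXY : Type := MvPolynomial (Fin 2) ℂ

/-- The ring `ℂ[x,y][[∂_x,∂_y]]` of functions on the completion of the total
space of `T*(ℂ×ℂ)` along the zero section: formal power series in the fiber
coordinates `∂_x, ∂_y` with polynomial coefficients. -/
abbrev CotRing : Type := MvPowerSeries (Fin 2) PolyXY

/-- The function `∂_x` (resp. `∂_y` for index 1) on the cotangent bundle. -/
def del (i : Fin 2) : CotRing :=
  MvPowerSeries.monomial (Finsupp.single i 1) 1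

/-- Multiplication of the fiber coordinate `∂_i` by a base function `p`. -/
def mul_del (i : Fin 2) (p : PolyXY) : CotRing :=
  MvPowerSeries.monomial (Finsupp.single i 1) p

/-- A series `F = ∑_{m,n} f_{m,n}(x,y) ∂_x^m ∂_y^n` is the restriction to this
chart of a global function on the completion of `T*(ℙ¹×ℙ¹)` along the zero
section iff each coefficient satisfies `deg_x f_{m,n} ≤ 2m` and
`deg_y f_{m,n} ≤ 2n` (regularity in the other charts `x ↦ 1/x`, `y ↦ 1/y`,
under which `∂_x = −x'²∂_{x'}`, `∂_y = −y'²∂_{y'}`). -/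
def IsGlobal (F : CotRing) : Prop :=
  ∀ d : Fin 2 →₀ ℕ,
    MvPolynomial.degreeOf 0 (MvPowerSeries.coeff d F) ≤ 2 * d 0 ∧
    MvPolynomial.degreeOf 1 (MvPowerSeries.coeff d F) ≤ 2 * d 1

/-- The six global functions `∂_x, x∂_x, x²∂_x, ∂_y, y∂_y, y²∂_y`. -/
def sixGens : Set CotRing :=
  {del 0, mul_del 0 (X 0), mul_del 0 (X 0 ^ 2),
   del 1, mul_del 1 (X 1), mul_del 1 (X 1 ^ 2)}

/-- Every `d : Fin 2 →₀ ℕ` decomposes as `single 0 (d 0) + single 1 (d 1)`. -/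
lemma fin2_decomp (d : Fin 2 →₀ ℕ) :
    Finsupp.single (0 : Fin 2) (d 0) + Finsupp.single (1 : Fin 2) (d 1) = d := by
  ext i
  fin_cases i <;> simp [Finsupp.single_apply]

/-- The subalgebra of global series. -/
def globalAlg : Subalgebra ℂ CotRing where
  carrier := {F | IsGlobal F}
  add_mem' := by
    intro a b ha hb d
    rw [map_add]
    constructor
    · exact le_trans (MvPolynomial.degreeOf_add_le _ _ _)
        (max_le (ha d).1 (hb d).1)
    · exact le_trans (MvPolynomial.degreeOf_add_le _ _ _)
        (max_le (ha d).2 (hb d).2)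
  mul_mem' := by
    intro a b ha hb d
    rw [MvPowerSeries.coeff_mul]
    constructor
    · refine le_trans (MvPolynomial.degreeOf_sum_le _ _ _) (Finset.sup_le fun p hp => ?_)
      have hpd : p.1 + p.2 = d := Finset.HasAntidiagonal.mem_antidiagonal.mp hp
      have h0 : p.1 0 + p.2 0 = d 0 := by rw [← hpd]; rfl
      refine le_trans (MvPolynomial.degreeOf_mul_le _ _ _) ?_
      calc MvPolynomial.degreeOf 0 (MvPowerSeries.coeff p.1 a) +
            MvPolynomial.degreeOf 0 (MvPowerSeries.coeff p.2 b)
          ≤ 2 * p.1 0 + 2 * p.2 0 := add_le_add (ha p.1).1 (hb p.2).1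
        _ = 2 * d 0 := by omega
    · refine le_trans (MvPolynomial.degreeOf_sum_le _ _ _) (Finset.sup_le fun p hp => ?_)
      have hpd : p.1 + p.2 = d := Finset.HasAntidiagonal.mem_antidiagonal.mp hp
      have h1 : p.1 1 + p.2 1 = d 1 := by rw [← hpd]; rfl
      refine le_trans (MvPolynomial.degreeOf_mul_le _ _ _) ?_
      calc MvPolynomial.degreeOf 1 (MvPowerSeries.coeff p.1 a) +
            MvPolynomial.degreeOf 1 (MvPowerSeries.coeff p.2 b)
          ≤ 2 * p.1 1 + 2 * p.2 1 := add_le_add (ha p.1).2 (hb p.2).2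
        _ = 2 * d 1 := by omega
  algebraMap_mem' := by
    intro c d
    rw [MvPowerSeries.algebraMap_apply, MvPowerSeries.coeff_C]
    split <;> simp

lemma isGlobal_monomial (e : Fin 2 →₀ ℕ) (p : PolyXY)
    (h0 : MvPolynomial.degreeOf 0 p ≤ 2 * e 0)
    (h1 : MvPolynomial.degreeOf 1 p ≤ 2 * e 1) :
    IsGlobal (MvPowerSeries.monomial e p) := by
  intro d
  classical
  rw [MvPowerSeries.coeff_monomial]
  split
  · next h => subst h; exact ⟨h0, h1⟩
  · simp

lemma degX (i j : Fin 2) (a : ℕ) :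
    MvPolynomial.degreeOf i ((X j : PolyXY) ^ a) = Finsupp.single j a i := by
  rw [MvPolynomial.X_pow_eq_monomial,
    MvPolynomial.degreeOf_monomial_eq _ _ (one_ne_zero : (1:ℂ) ≠ 0)]

lemma sixGens_global : sixGens ⊆ (globalAlg : Set CotRing) := by
  intro P hP
  simp only [sixGens, Set.mem_insert_iff, Set.mem_singleton_iff] at hP
  have d1 : ∀ i : Fin 2, MvPolynomial.degreeOf i (1 : PolyXY) = 0 := fun i => by
    rw [← MvPolynomial.C_1, MvPolynomial.degreeOf_C]
  have dX : ∀ i j : Fin 2,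
      MvPolynomial.degreeOf i (X j : PolyXY) = Finsupp.single j 1 i := fun i j => by
    rw [← pow_one (X j : PolyXY), degX]
  rcases hP with rfl | rfl | rfl | rfl | rfl | rfl <;>
    (first | rw [del] | rw [mul_del]) <;>
    refine isGlobal_monomial _ _ ?_ ?_ <;>
    simp [d1, dX, degX, Finsupp.single_apply]

lemma gen_mem (j : Fin 2) (e : ℕ) (he : e ≤ 2) :
    mul_del j ((X j : PolyXY) ^ e) ∈ sixGens := by
  fin_cases j <;> interval_cases e <;>
    simp [sixGens, mul_del, del, pow_one, pow_zero]

lemma mon_mem (j : Fin 2) (i a : ℕ) (ha : a ≤ 2 * i) :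
    (MvPowerSeries.monomial (Finsupp.single j i) ((X j : PolyXY) ^ a))
      ∈ Algebra.adjoin ℂ sixGens := by
  induction i generalizing a with
  | zero =>
      obtain rfl : a = 0 := by omega
      rw [Finsupp.single_zero, pow_zero, MvPowerSeries.monomial_zero_eq_C_apply]
      simpa using one_mem (Algebra.adjoin ℂ sixGens)
  | succ n ih =>
      have h1 : (1:ℕ) + n = n + 1 := by omega
      have h2 : min a 2 + (a - min a 2) = a := by omega
      have key : (MvPowerSeries.monomial (Finsupp.single j (n+1)) ((X j:PolyXY) ^ a))
          = mul_del j ((X j:PolyXY) ^ (min a 2)) *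
            MvPowerSeries.monomial (Finsupp.single j n) ((X j:PolyXY) ^ (a - min a 2)) := by
        rw [mul_del, MvPowerSeries.monomial_mul_monomial, ← pow_add,
          ← Finsupp.single_add, h1, h2]
      rw [key]
      exact mul_mem (Algebra.subset_adjoin (gen_mem j _ (min_le_right a 2)))
        (ih _ (by omega))

lemma mon_mem' (dd : Fin 2 →₀ ℕ) (f : PolyXY)
    (h0 : MvPolynomial.degreeOf 0 f ≤ 2 * dd 0)
    (h1 : MvPolynomial.degreeOf 1 f ≤ 2 * dd 1) :
    (MvPowerSeries.monomial dd f) ∈ Algebra.adjoin ℂ sixGens := by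
  have hsum : MvPowerSeries.monomial dd f
      = ∑ v ∈ f.support, MvPowerSeries.monomial dd
          (MvPolynomial.monomial v (MvPolynomial.coeff v f)) := by
    rw [← map_sum, ← MvPolynomial.as_sum]
  rw [hsum]
  refine Subalgebra.sum_mem _ fun v hv => ?_
  have hterm : (MvPowerSeries.monomial dd
        (MvPolynomial.monomial v (MvPolynomial.coeff v f)))
      = algebraMap ℂ CotRing (MvPolynomial.coeff v f)
        * (MvPowerSeries.monomial (Finsupp.single 0 (dd 0)) ((X 0:PolyXY) ^ v 0)
           * MvPowerSeries.monomial (Finsupp.single 1 (dd 1)) ((X 1:PolyXY) ^ v 1)) := by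
    rw [MvPowerSeries.algebraMap_apply, ← MvPowerSeries.monomial_zero_eq_C_apply,
      MvPowerSeries.monomial_mul_monomial, MvPowerSeries.monomial_mul_monomial,
      zero_add, fin2_decomp]
    congr 1
    rw [MvPolynomial.algebraMap_eq, MvPolynomial.X_pow_eq_monomial,
      MvPolynomial.X_pow_eq_monomial, MvPolynomial.C_apply,
      MvPolynomial.monomial_mul, MvPolynomial.monomial_mul, one_mul, mul_one, zero_add,
      fin2_decomp]
  rw [hterm]
  refine mul_mem (Subalgebra.algebraMap_mem _ _) (mul_mem ?_ ?_)
  · exact mon_mem 0 (dd 0) (v 0) (le_trans (MvPolynomial.monomial_le_degreeOf 0 hv) h0)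
  · exact mon_mem 1 (dd 1) (v 1) (le_trans (MvPolynomial.monomial_le_degreeOf 1 hv) h1)

/-- The ℂ-algebra of global sections of the completion of `T*_{ℙ¹×ℙ¹}` along the
zero section, viewed inside `ℂ[x,y][[∂_x,∂_y]]` as the subalgebra of global
series, is topologically generated by `∂_x, x∂_x, x²∂_x, ∂_y, y∂_y, y²∂_y`:
every element of the subalgebra ℂ-generated by these six is global, and every
global series agrees with an element of that subalgebra in each truncation
(density for the `(∂_x,∂_y)`-adic topology). -/
theorem stmt18 :
    (∀ P ∈ Algebra.adjoin ℂ sixGens, IsGlobal P) ∧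
    (∀ F : CotRing, IsGlobal F → ∀ N : ℕ,
      ∃ P ∈ Algebra.adjoin ℂ sixGens,
        ∀ d : Fin 2 →₀ ℕ, (d 0 + d 1 < N) →
          MvPowerSeries.coeff d F = MvPowerSeries.coeff d P) := by
  constructor
  · intro P hP
    exact Algebra.adjoin_le sixGens_global hP
  · intro F hF N
    classical
    set e : ℕ × ℕ → (Fin 2 →₀ ℕ) :=
      fun p => Finsupp.single 0 p.1 + Finsupp.single 1 p.2 with he
    have he0 : ∀ p : ℕ × ℕ, e p 0 = p.1 := by
      intro p; simp [he, Finsupp.single_apply]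
    have he1 : ∀ p : ℕ × ℕ, e p 1 = p.2 := by
      intro p; simp [he, Finsupp.single_apply]
    refine ⟨∑ p ∈ Finset.range N ×ˢ Finset.range N,
        MvPowerSeries.monomial (e p) (MvPowerSeries.coeff (e p) F),
      ?_, ?_⟩
    · refine Subalgebra.sum_mem _ fun p _ => ?_
      refine mon_mem' _ _ ?_ ?_
      · rw [he0]; exact le_trans (hF (e p)).1 (by rw [he0])
      · rw [he1]; exact le_trans (hF (e p)).2 (by rw [he1])
    · intro d hd
      rw [map_sum]
      have hde : e (d 0, d 1) = d := fin2_decomp d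
      rw [Finset.sum_eq_single_of_mem (d 0, d 1)
        (by simp [Finset.mem_product]; omega)]
      · rw [hde, MvPowerSeries.coeff_monomial_same]
      · intro p _ hne
        refine MvPowerSeries.coeff_monomial_ne (fun h => hne ?_) _
        have h0 : p.1 = d 0 := by rw [← he0 p, h]
        have h1 : p.2 = d 1 := by rw [← he1 p, h]
        exact Prod.ext h0 h1
end
end
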